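/- Let A = M_{k_1} × ⋯ × M_{k_n} be a finite product where M_k = {0, 1/k, …, 1} ⊆ [0,1], and let a_1, …, a_n be the atoms of A (the standard basis elements with value 1/k_i in the i-th component and 0 elsewhere). Let N be the unit interval of an abelian lattice-ordered group H with unit. A function s : {a_1, …, a_n} → N extends to a state A → N if and only if k_1·s(a_1) + ⋯ + k_n·s(a_n) = 1 in H, and in that case the extension is unique. -/

import Mathlib

/-- A state of the unit interval of the simplicial group (ℤ^n, k) with values in
the unit interval of an abelian lattice-ordered group H with unit u:
it maps the unit interval into the unit interval, is normalised, and is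
additive whenever a, b, a+b all lie in the unit interval. -/
def IsSimplicialState {n : ℕ} {H : Type*} [Lattice H] [AddCommGroup H]
    (kv : Fin n → ℤ) (u : H) (s : (Fin n → ℤ) → H) : Prop :=
  (∀ a : Fin n → ℤ, 0 ≤ a → a ≤ kv → 0 ≤ s a ∧ s a ≤ u) ∧
  s kv = u ∧
  (∀ a b : Fin n → ℤ, 0 ≤ a → a ≤ kv → 0 ≤ b → b ≤ kv → a + b ≤ kv →
    s (a + b) = s a + s b)

section Aux

variable {H : Type*} [Lattice H] [AddCommGroup H] [CovariantClass H H (· + ·) (· ≤ ·)]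

lemma aux_nsmul_nonneg {x : H} (hx : 0 ≤ x) : ∀ m : ℕ, 0 ≤ m • x := by
  intro m
  induction m with
  | zero => simp
  | succ p ih => rw [succ_nsmul]; exact add_nonneg ih hx

lemma aux_zsmul_nonneg {x : H} (hx : 0 ≤ x) {m : ℤ} (hm : 0 ≤ m) : 0 ≤ m • x := by
  lift m to ℕ using hm
  rw [natCast_zsmul]
  exact aux_nsmul_nonneg hx m

lemma aux_zsmul_le {x : H} (hx : 0 ≤ x) {m p : ℤ} (h : m ≤ p) : m • x ≤ p • x := by
  have h2 : 0 ≤ (p - m) • x := aux_zsmul_nonneg hx (by omega)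
  rw [sub_smul, sub_nonneg] at h2
  exact h2

lemma aux_sum_nonneg {n : ℕ} {g : Fin n → H} (hg : ∀ i, 0 ≤ g i) :
    0 ≤ ∑ i, g i :=
  Finset.sum_induction g (0 ≤ ·) (fun _ _ ha hb => add_nonneg ha hb) le_rfl
    (fun i _ => hg i)

lemma aux_sum_le {n : ℕ} {g h : Fin n → H} (hg : ∀ i, g i ≤ h i) :
    ∑ i, g i ≤ ∑ i, h i := by
  have h2 : 0 ≤ ∑ i, (h i - g i) := aux_sum_nonneg (fun i => by simpa using hg i)
  rw [Finset.sum_sub_distrib, sub_nonneg] at h2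
  exact h2

/-- Key decomposition: a state is determined by its values on the atoms. -/
lemma state_decomp {n : ℕ} (kv : Fin n → ℤ) (u : H) (s : (Fin n → ℤ) → H)
    (hs : IsSimplicialState kv u s) :
    ∀ N : ℕ, ∀ a : Fin n → ℤ, (∑ i, (a i).toNat) = N → 0 ≤ a → a ≤ kv →
      s a = ∑ i, a i • s (Pi.single i 1) := by
  obtain ⟨hbd, hnorm, hadd⟩ := hs
  intro N
  induction N with
  | zero =>
    intro a hsum ha hak
    have ha0 : a = 0 := by
      funext j
      have h1 : (a j).toNat = 0 := by
        have := Finset.sum_eq_zero_iff.mp hsum j (Finset.mem_univ j)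
        exact this
      have h2 := ha j
      simp only [Pi.zero_apply] at h2 ⊢
      omega
    subst ha0
    have hkv0 : (0 : Fin n → ℤ) ≤ kv := hak
    have hz := hadd 0 0 le_rfl hkv0 le_rfl hkv0 (by simpa using hkv0)
    simp only [add_zero] at hz
    have hs0 : s 0 = 0 := left_eq_add.mp hz
    simp [hs0]
  | succ N ih =>
    intro a hsum ha hak
    have hex : ∃ i, 0 < a i := by
      by_contra hcon
      push_neg at hcon
      have : ∀ j ∈ Finset.univ, (a j).toNat = 0 := by
        intro j _
        have := hcon j
        omega
      rw [Finset.sum_eq_zero this] at hsum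
      omega
    obtain ⟨i, hi⟩ := hex
    have hps : ∀ j, (Pi.single i 1 : Fin n → ℤ) j = if j = i then 1 else 0 := by
      intro j
      by_cases hji : j = i
      · subst hji; rw [if_pos rfl, Pi.single_eq_same]
      · rw [if_neg hji, Pi.single_eq_of_ne hji]
    obtain ⟨b, hbval⟩ : ∃ b : Fin n → ℤ, ∀ j, b j = a j - (if j = i then 1 else 0) :=
      ⟨fun j => a j - (if j = i then 1 else 0), fun _ => rfl⟩
    have hb0 : 0 ≤ b := by
      intro j
      have h2 : (0:ℤ) ≤ a j := ha j
      show (0:ℤ) ≤ b j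
      rw [hbval j]
      by_cases hji : j = i
      · subst hji; rw [if_pos rfl]; omega
      · rw [if_neg hji]; omega
    have hbk : b ≤ kv := by
      intro j
      have h1 : a j ≤ kv j := hak j
      show b j ≤ kv j
      rw [hbval j]
      by_cases hji : j = i
      · subst hji; rw [if_pos rfl]; omega
      · rw [if_neg hji]; omega
    have hsing0 : (0 : Fin n → ℤ) ≤ Pi.single i 1 := by
      intro j
      simp only [Pi.zero_apply]
      rw [hps j]
      by_cases hji : j = i
      · rw [if_pos hji]; omega
      · rw [if_neg hji]
    have hsingk : Pi.single i (1:ℤ) ≤ kv := by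
      intro j
      have hgoal : (Pi.single i 1 : Fin n → ℤ) j ≤ kv j := by
        rw [hps j]
        have h1 : a j ≤ kv j := hak j
        have h2 : (0:ℤ) ≤ a j := ha j
        have h3 : a i ≤ kv i := hak i
        by_cases hji : j = i
        · subst hji; rw [if_pos rfl]; omega
        · rw [if_neg hji]; omega
      exact hgoal
    have hab : b + Pi.single i 1 = a := by
      funext j
      rw [Pi.add_apply, hbval j, hps j]
      by_cases hji : j = i
      · subst hji; rw [if_pos rfl]; omega
      · rw [if_neg hji]; omega
    have habk : b + Pi.single i 1 ≤ kv := by rw [hab]; exact hak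
    have hsa : s a = s b + s (Pi.single i 1) := by
      rw [← hab]
      exact hadd b (Pi.single i 1) hb0 hbk hsing0 hsingk habk
    have hsumb : (∑ j, (b j).toNat) = N := by
      have key : ∀ j, (a j).toNat = (b j).toNat + (if j = i then 1 else 0) := by
        intro j
        have h3 := hbval j
        have h4 : (0:ℤ) ≤ a j := ha j
        by_cases hji : j = i
        · subst hji; rw [if_pos rfl] at h3 ⊢; omega
        · rw [if_neg hji] at h3 ⊢; omega
      rw [Finset.sum_congr rfl (fun j _ => key j), Finset.sum_add_distrib] at hsum
      have hone : ∑ j : Fin n, (if j = i then (1:ℕ) else 0) = 1 := by simp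
      rw [hone] at hsum
      omega
    have hIH := ih b hsumb hb0 hbk
    rw [hsa, hIH]
    have hrhs : ∑ j, a j • s (Pi.single j 1)
        = ∑ j, b j • s (Pi.single j 1) + ∑ j, ((Pi.single i 1 : Fin n → ℤ) j) • s (Pi.single j 1) := by
      rw [← Finset.sum_add_distrib]
      refine Finset.sum_congr rfl (fun j _ => ?_)
      rw [← add_smul]
      congr 1
      rw [hbval j, hps j]
      by_cases hji : j = i
      · subst hji; rw [if_pos rfl]; omega
      · rw [if_neg hji]; omega
    rw [hrhs]
    congr 1
    simp [Pi.single_apply, ite_smul]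

end Aux

/-- A function defined on the atoms of A = M_{k_1} × ⋯ × M_{k_n}
(identified with the unit interval of (ℤ^n, k), the atoms being the standard
basis vectors) with values in the unit interval of H extends to a state A → N
iff k_1·s(a_1) + ⋯ + k_n·s(a_n) = 1, and the extension is unique. -/
theorem finite_mv_state_extension
    {n : ℕ} {H : Type*} [Lattice H] [AddCommGroup H]
    [CovariantClass H H (· + ·) (· ≤ ·)]
    (u : H) (hu : 0 ≤ u)
    (k : Fin n → ℕ) (hk : ∀ i, 0 < k i)
    (f : Fin n → H) (hf : ∀ i, 0 ≤ f i ∧ f i ≤ u) :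
    ((∃ s : (Fin n → ℤ) → H,
        IsSimplicialState (fun i => (k i : ℤ)) u s ∧
        ∀ i, s (Pi.single i 1) = f i) ↔ ∑ i, k i • f i = u) ∧
    (∀ s t : (Fin n → ℤ) → H,
       IsSimplicialState (fun i => (k i : ℤ)) u s →
       IsSimplicialState (fun i => (k i : ℤ)) u t →
       (∀ i, s (Pi.single i 1) = t (Pi.single i 1)) →
       ∀ a : Fin n → ℤ, 0 ≤ a → a ≤ (fun i => (k i : ℤ)) → s a = t a) := by
  set kv : Fin n → ℤ := fun i => (k i : ℤ) with hkv
  have hkv0 : (0 : Fin n → ℤ) ≤ kv := fun i => by positivity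
  constructor
  · constructor
    · rintro ⟨s, hs, hatoms⟩
      have hdec := state_decomp kv u s hs (∑ i, (kv i).toNat) kv rfl hkv0 le_rfl
      rw [hs.2.1] at hdec
      rw [hdec]
      refine Finset.sum_congr rfl (fun i _ => ?_)
      rw [hatoms i, hkv]
      simp [natCast_zsmul]
    · intro hsum
      refine ⟨fun a => ∑ i, a i • f i, ⟨?_, ?_, ?_⟩, ?_⟩
      · intro a ha hak
        constructor
        · exact aux_sum_nonneg (fun i => aux_zsmul_nonneg (hf i).1 (ha i))
        · calc ∑ i, a i • f i ≤ ∑ i, kv i • f i :=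
                aux_sum_le (fun i => aux_zsmul_le (hf i).1 (hak i))
            _ = u := by
              rw [← hsum]
              exact Finset.sum_congr rfl (fun i _ => by simp [hkv, natCast_zsmul])
      · rw [← hsum]
        exact Finset.sum_congr rfl (fun i _ => by simp [hkv, natCast_zsmul])
      · intro a b _ _ _ _ _
        simp only [Pi.add_apply, add_smul]
        rw [Finset.sum_add_distrib]
      · intro i
        simp [Pi.single_apply, ite_smul]
  · intro s t hs ht hatoms a ha hak
    rw [state_decomp kv u s hs (∑ i, (a i).toNat) a rfl ha hak,
      state_decomp kv u t ht (∑ i, (a i).toNat) a rfl ha hak]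
    exact Finset.sum_congr rfl (fun i _ => by rw [hatoms i])
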